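/- arXiv:2311.09123 — 5 statements merged into one kernel-verified Lean document; each statement's English description precedes it below -/
import Mathlib

section
/- If f : ℝ^d → ℝ is convex and differentiable with L-Lipschitz continuous gradient (L > 0), then L^{-1}∇f is firmly nonexpansive: for all u, v ∈ ℝ^d, ⟨L^{-1}∇f(u) − L^{-1}∇f(v), u − v⟩ ≥ ‖L^{-1}∇f(u) − L^{-1}∇f(v)‖₂². -/
open scoped RealInnerProductSpace

section Aux

variable {E : Type*} [NormedAddCommGroup E] [InnerProductSpace ℝ E] [CompleteSpace E]

private lemma line_hasDerivAt (g : E → ℝ) (g' : E → E)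
    (hgrad : ∀ z, HasGradientAt g (g' z) z) (x y : E) (t : ℝ) :
    HasDerivAt (fun s : ℝ => g (x + s • (y - x))) ⟪g' (x + t • (y - x)), y - x⟫ t := by
  have hc : HasDerivAt (fun s : ℝ => x + s • (y - x)) (y - x) t := by
    simpa using ((hasDerivAt_id t).smul_const (y - x)).const_add x
  have h := ((hgrad (x + t • (y - x))).hasFDerivAt).comp_hasDerivAt t hc
  simpa [InnerProductSpace.toDual_apply_apply, Function.comp_def] using h

/-- Gradient inequality for convex functions. -/
private lemma grad_ineq (g : E → ℝ) (g' : E → E) (hconv : ConvexOn ℝ Set.univ g)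
    (hgrad : ∀ z, HasGradientAt g (g' z) z) (x y : E) :
    g x + ⟪g' x, y - x⟫ ≤ g y := by
  set h : ℝ → ℝ := fun s => g (x + s • (y - x)) with hh
  have hconv' : ConvexOn ℝ Set.univ h := by
    have := hconv.comp_affineMap (AffineMap.lineMap x y : ℝ →ᵃ[ℝ] E)
    have heq : (g ∘ (AffineMap.lineMap x y : ℝ →ᵃ[ℝ] E)) = h := by
      funext s
      simp [h, AffineMap.lineMap_apply, add_comm]
    rw [heq] at this
    simpa using this
  have hd0 : HasDerivAt h ⟪g' x, y - x⟫ 0 := by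
    simpa using line_hasDerivAt g g' hgrad x y 0
  have hslope := hconv'.le_slope_of_hasDerivAt (Set.mem_univ 0) (Set.mem_univ 1)
    zero_lt_one hd0
  have h1 : h 1 = g y := by simp [h]
  have h0 : h 0 = g x := by simp [h]
  rw [slope_def_field] at hslope
  simp only [h1, h0, sub_zero, div_one] at hslope
  linarith

/-- Descent lemma: quadratic upper bound from Lipschitz gradient. -/
private lemma descent_lemma (g : E → ℝ) (g' : E → E) (L : ℝ) (hL : 0 < L)
    (hgrad : ∀ z, HasGradientAt g (g' z) z)
    (hlip : ∀ a b, ‖g' a - g' b‖ ≤ L * ‖a - b‖) (x y : E) :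
    g y ≤ g x + ⟪g' x, y - x⟫ + L / 2 * ‖y - x‖ ^ 2 := by
  set h : ℝ → ℝ := fun s =>
    g (x + s • (y - x)) - s * ⟪g' x, y - x⟫ - L * s ^ 2 / 2 * ‖y - x‖ ^ 2 with hh
  have hd : ∀ t : ℝ, HasDerivAt h
      (⟪g' (x + t • (y - x)), y - x⟫ - ⟪g' x, y - x⟫ - L * t * ‖y - x‖ ^ 2) t := by
    intro t
    have h1 := line_hasDerivAt g g' hgrad x y t
    have h2 : HasDerivAt (fun s : ℝ => s * ⟪g' x, y - x⟫) ⟪g' x, y - x⟫ t := by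
      simpa using (hasDerivAt_id t).mul_const ⟪g' x, y - x⟫
    have h3 : HasDerivAt (fun s : ℝ => L * s ^ 2 / 2 * ‖y - x‖ ^ 2)
        (L * t * ‖y - x‖ ^ 2) t := by
      have : HasDerivAt (fun s : ℝ => s ^ 2) (2 * t) t := by
        simpa using hasDerivAt_pow 2 t
      have := ((this.const_mul L).div_const 2).mul_const (‖y - x‖ ^ 2)
      refine this.congr_deriv ?_
      ring
    exact (h1.sub h2).sub h3
  have hanti : AntitoneOn h (Set.Icc (0:ℝ) 1) := by
    apply antitoneOn_of_deriv_nonpos (convex_Icc 0 1)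
    · exact fun t _ => ((hd t).differentiableAt).continuousAt.continuousWithinAt
    · exact fun t _ => ((hd t).differentiableAt).differentiableWithinAt
    · intro t ht
      rw [interior_Icc] at ht
      rw [(hd t).deriv]
      have key : ⟪g' (x + t • (y - x)) - g' x, y - x⟫ ≤ L * t * ‖y - x‖ ^ 2 := by
        calc ⟪g' (x + t • (y - x)) - g' x, y - x⟫
            ≤ ‖g' (x + t • (y - x)) - g' x‖ * ‖y - x‖ := real_inner_le_norm _ _
          _ ≤ (L * ‖(x + t • (y - x)) - x‖) * ‖y - x‖ := by
              have := hlip (x + t • (y - x)) x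
              nlinarith [norm_nonneg (y - x)]
          _ = L * t * ‖y - x‖ ^ 2 := by
              rw [add_sub_cancel_left, norm_smul, Real.norm_eq_abs,
                abs_of_pos ht.1]
              ring
      rw [inner_sub_left] at key
      linarith
  have h10 : h 1 ≤ h 0 := hanti (by norm_num) (by norm_num) zero_le_one
  have h1 : h 1 = g y - ⟪g' x, y - x⟫ - L / 2 * ‖y - x‖ ^ 2 := by
    have hx1 : x + (1:ℝ) • (y - x) = y := by simp
    simp only [h, hx1, one_pow, mul_one]; ring
  have h0 : h 0 = g x := by simp [h]
  rw [h1, h0] at h10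
  linarith

/-- Quadratic lower bound for convex functions with Lipschitz gradient. -/
private lemma lower_quad (f : E → ℝ) (f' : E → E) (L : ℝ) (hL : 0 < L)
    (hconv : ConvexOn ℝ Set.univ f)
    (hgrad : ∀ z, HasGradientAt f (f' z) z)
    (hlip : ∀ a b, ‖f' a - f' b‖ ≤ L * ‖a - b‖) (x y : E) :
    f x + ⟪f' x, y - x⟫ + 1 / (2 * L) * ‖f' y - f' x‖ ^ 2 ≤ f y := by
  set φ : E → ℝ := fun z => f z - ⟪f' x, z⟫ with hφ
  set φ' : E → E := fun z => f' z - f' x with hφ'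
  have hφgrad : ∀ z, HasGradientAt φ (φ' z) z := by
    intro z
    rw [hasGradientAt_iff_hasFDerivAt]
    have h2 : HasFDerivAt (fun z : E => ⟪f' x, z⟫)
        (InnerProductSpace.toDual ℝ E (f' x)) z :=
      (InnerProductSpace.toDual ℝ E (f' x)).hasFDerivAt
    have := (hgrad z).hasFDerivAt.sub h2
    refine this.congr_fderiv ?_
    exact (map_sub (InnerProductSpace.toDual ℝ E) (f' z) (f' x)).symm
  have hφconv : ConvexOn ℝ Set.univ φ := by
    refine ⟨convex_univ, ?_⟩
    intro p _ q _ a b ha hb hab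
    have := hconv.2 (Set.mem_univ p) (Set.mem_univ q) ha hb hab
    simp only [φ, smul_eq_mul, inner_add_right, real_inner_smul_right]
    simp only [smul_eq_mul] at this
    linarith
  have hφlip : ∀ a b, ‖φ' a - φ' b‖ ≤ L * ‖a - b‖ := by
    intro a b
    have : φ' a - φ' b = f' a - f' b := by simp [φ']
    rw [this]; exact hlip a b
  -- x minimizes φ
  have hmin : ∀ z, φ x ≤ φ z := by
    intro z
    have := grad_ineq φ φ' hφconv hφgrad x z
    have hx0 : φ' x = 0 := by simp [φ']
    rw [hx0] at this
    simpa using this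
  -- apply descent lemma to φ at y towards z = y - L⁻¹ • (f' y - f' x)
  set z := y - L⁻¹ • (f' y - f' x) with hz
  have hdes := descent_lemma φ φ' L hL hφgrad hφlip y z
  have hzy : z - y = -(L⁻¹ • (f' y - f' x)) := by rw [hz]; abel
  have hin : ⟪φ' y, z - y⟫ = -(L⁻¹ * ‖f' y - f' x‖ ^ 2) := by
    rw [hzy]
    simp only [φ', inner_neg_right, real_inner_smul_right]
    rw [real_inner_self_eq_norm_sq]
  have hnz : ‖z - y‖ ^ 2 = L⁻¹ ^ 2 * ‖f' y - f' x‖ ^ 2 := by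
    rw [hzy, norm_neg, norm_smul, Real.norm_eq_abs, abs_of_pos (inv_pos.mpr hL),
      mul_pow]
  rw [hin, hnz] at hdes
  have hmz := hmin z
  have hLne : L ≠ 0 := ne_of_gt hL
  have key : φ x ≤ φ y - 1 / (2 * L) * ‖f' y - f' x‖ ^ 2 := by
    have : L / 2 * (L⁻¹ ^ 2 * ‖f' y - f' x‖ ^ 2)
        = 1 / (2 * L) * ‖f' y - f' x‖ ^ 2 := by
      field_simp
    rw [this] at hdes
    calc φ x ≤ φ z := hmz
      _ ≤ φ y + -(L⁻¹ * ‖f' y - f' x‖ ^ 2) + 1 / (2 * L) * ‖f' y - f' x‖ ^ 2 := hdes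
      _ ≤ φ y - 1 / (2 * L) * ‖f' y - f' x‖ ^ 2 := by
          have : L⁻¹ * ‖f' y - f' x‖ ^ 2 = 2 * (1 / (2 * L) * ‖f' y - f' x‖ ^ 2) := by
            field_simp
          rw [this]; ring_nf; linarith [le_refl (φ y)]
  simp only [φ] at key
  have hsub : ⟪f' x, y - x⟫ = ⟪f' x, y⟫ - ⟪f' x, x⟫ := inner_sub_right _ _ _
  linarith

end Aux

/-- If `f : ℝ^d → ℝ` is convex and differentiable with `L`-Lipschitz continuous gradient
(`L > 0`), then `L⁻¹ ∇f` is firmly nonexpansive: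
`⟨L⁻¹∇f(u) − L⁻¹∇f(v), u − v⟩ ≥ ‖L⁻¹∇f(u) − L⁻¹∇f(v)‖²`. -/
theorem inv_lipschitz_gradient_firmly_nonexpansive {d : ℕ}
    (f : EuclideanSpace ℝ (Fin d) → ℝ) (f' : EuclideanSpace ℝ (Fin d) → EuclideanSpace ℝ (Fin d))
    (L : ℝ) (hL : 0 < L)
    (hconv : ConvexOn ℝ Set.univ f)
    (hgrad : ∀ x, HasGradientAt f (f' x) x)
    (hlip : ∀ x y, ‖f' x - f' y‖ ≤ L * ‖x - y‖)
    (u v : EuclideanSpace ℝ (Fin d)) :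
    ⟪L⁻¹ • f' u - L⁻¹ • f' v, u - v⟫ ≥ ‖L⁻¹ • f' u - L⁻¹ • f' v‖ ^ 2 := by
  have h1 := lower_quad f f' L hL hconv hgrad hlip u v
  have h2 := lower_quad f f' L hL hconv hgrad hlip v u
  have hnorm : ‖f' u - f' v‖ = ‖f' v - f' u‖ := by rw [← norm_neg]; congr 1; abel
  have hcoco : L⁻¹ * ‖f' v - f' u‖ ^ 2 ≤ ⟪f' u - f' v, u - v⟫ := by
    rw [hnorm] at h2
    have hiuv : ⟪f' u - f' v, u - v⟫ = ⟪f' u, u - v⟫ - ⟪f' v, u - v⟫ :=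
      inner_sub_left _ _ _
    have hvu : ⟪f' u, v - u⟫ = -⟪f' u, u - v⟫ := by
      rw [← inner_neg_right]; congr 1; abel
    have hinv : L⁻¹ = 2 * (1 / (2 * L)) := by field_simp
    rw [hiuv, hinv]
    linarith
  have hsm : L⁻¹ • f' u - L⁻¹ • f' v = L⁻¹ • (f' u - f' v) := (smul_sub _ _ _).symm
  rw [hsm, real_inner_smul_left, norm_smul, Real.norm_eq_abs,
    abs_of_pos (inv_pos.mpr hL), mul_pow]
  rw [ge_iff_le, hnorm]
  have hL2 : (0:ℝ) < L⁻¹ := inv_pos.mpr hL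
  nlinarith [hcoco, sq_nonneg ‖f' v - f' u‖]
end

section
/- Let (a_n) and (b_n) be sequences of nonnegative reals with Σ_n a_n < ∞ and Σ_n b_n < ∞. If a sequence (ε_n) of nonnegative reals satisfies ε_{n+1}² ≤ (1 + 2a_n)ε_n² + 2 b_n ε_{n+1} for all n, then (ε_n) is bounded. -/
/-- Let `(a_n)` and `(b_n)` be summable sequences of nonnegative reals. If a sequence
`(ε_n)` of nonnegative reals satisfies `ε_{n+1}² ≤ (1 + 2a_n)ε_n² + 2 b_n ε_{n+1}` for
all `n`, then `(ε_n)` is bounded. -/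
theorem bounded_of_recursive_inequality
    (a b ε : ℕ → ℝ)
    (ha : ∀ n, 0 ≤ a n) (hb : ∀ n, 0 ≤ b n) (hε : ∀ n, 0 ≤ ε n)
    (hsa : Summable a) (hsb : Summable b)
    (hrec : ∀ n, ε (n + 1) ^ 2 ≤ (1 + 2 * a n) * ε n ^ 2 + 2 * b n * ε (n + 1)) :
    ∃ C : ℝ, ∀ n, ε n ≤ C := by
  -- Step 1: linearize the recursion
  have hlin : ∀ n, ε (n + 1) ≤ (1 + a n) * ε n + 2 * b n := by
    intro n
    by_contra h
    push_neg at h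
    have hx : 0 ≤ ε (n+1) := hε _
    have hy : 0 ≤ ε n := hε _
    have hrhs : 0 ≤ (1 + a n) * ε n + 2 * b n := by
      have := ha n; have := hb n; nlinarith
    have hxpos : 0 < ε (n+1) := lt_of_le_of_lt hrhs h
    have h2 := mul_lt_mul_of_pos_left h hxpos
    have h3 : (1 + a n) * ε n ≤ ε (n+1) := by have := hb n; linarith
    have h4 : ((1 + a n) * ε n) * ((1 + a n) * ε n) ≤ ε (n+1) * ((1 + a n) * ε n) :=
      mul_le_mul_of_nonneg_right h3 (by have := ha n; positivity)
    nlinarith [hrec n, h2, h4, sq_nonneg (a n * ε n)]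
  -- Step 2: Gronwall-type bound
  set S : ℕ → ℝ := fun n => ∑ k ∈ Finset.range n, a k with hS
  set T : ℕ → ℝ := fun n => ∑ k ∈ Finset.range n, b k with hT
  have hSnn : ∀ n, 0 ≤ S n := fun n => Finset.sum_nonneg fun k _ => ha k
  have hTnn : ∀ n, 0 ≤ T n := fun n => Finset.sum_nonneg fun k _ => hb k
  have key : ∀ n, ε n ≤ Real.exp (S n) * (ε 0 + 2 * T n) := by
    intro n
    induction n with
    | zero => simp [hS, hT, hε 0]
    | succ n ih =>
      have hexp1 : (1 : ℝ) ≤ Real.exp (S n) := Real.one_le_exp (hSnn n)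
      have h1a : (1 + a n) ≤ Real.exp (a n) := by
        have := Real.add_one_le_exp (a n); linarith
      have hSstep : S (n+1) = S n + a n := by simp [hS, Finset.sum_range_succ]
      have hTstep : T (n+1) = T n + b n := by simp [hT, Finset.sum_range_succ]
      have hε0T : 0 ≤ ε 0 + 2 * T n := by have := hε 0; have := hTnn n; linarith
      calc ε (n+1) ≤ (1 + a n) * ε n + 2 * b n := hlin n
        _ ≤ (1 + a n) * (Real.exp (S n) * (ε 0 + 2 * T n)) + 2 * b n := by
            have h1an : (0:ℝ) ≤ 1 + a n := by have := ha n; linarith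
            nlinarith [mul_le_mul_of_nonneg_left ih h1an]
        _ ≤ Real.exp (a n) * (Real.exp (S n) * (ε 0 + 2 * T n)) + 2 * b n := by
            have := mul_nonneg (le_trans zero_le_one hexp1) hε0T
            nlinarith
        _ ≤ Real.exp (S (n+1)) * (ε 0 + 2 * T (n+1)) := by
            rw [hSstep, hTstep, Real.exp_add]
            have hexpS1 : (1:ℝ) ≤ Real.exp (S n + a n) := Real.one_le_exp (by have := hSnn n; have := ha n; linarith)
            have hbn := hb n
            rw [Real.exp_add] at hexpS1
            nlinarith
  -- Step 3: uniform bound via tsums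
  refine ⟨Real.exp (∑' n, a n) * (ε 0 + 2 * ∑' n, b n), fun n => ?_⟩
  have hSle : S n ≤ ∑' n, a n := Summable.sum_le_tsum (Finset.range n) (fun k _ => ha k) hsa
  have hTle : T n ≤ ∑' n, b n := Summable.sum_le_tsum (Finset.range n) (fun k _ => hb k) hsb
  have hexp_le : Real.exp (S n) ≤ Real.exp (∑' n, a n) := Real.exp_le_exp.mpr hSle
  have h1 : 0 ≤ ε 0 + 2 * T n := by have := hε 0; have := hTnn n; linarith
  calc ε n ≤ Real.exp (S n) * (ε 0 + 2 * T n) := key n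
    _ ≤ Real.exp (∑' n, a n) * (ε 0 + 2 * ∑' n, b n) := by
        have : (0:ℝ) < Real.exp (S n) := Real.exp_pos _
        nlinarith
end

section
/- Let μ > 0, L ≥ 0, (μ_n) a sequence of positive reals with Σ_n |μ_n − μ| < ∞, A : ℝ^d → ℝ^{d'} linear, and α, β > 0 with β‖A‖² < α^{-1} − L/2 (operator/spectral norm). Then the block matrices M_n = [[ (μ_n α)^{-1} I , −Aᵀ ], [ −A , μ_n β^{-1} I ]] and M = [[ (μ α)^{-1} I , −Aᵀ ], [ −A , μ β^{-1} I ]] on ℝ^{d+d'} are positive definite, and there exist constants C₁, C₂ > 0 independent of n such that ⟨(u,v), M_n(u,v)⟩ − L‖u‖₂²/(2μ_n) ≥ C₁‖(u,v)‖₂² for all n and all (u,v) ∈ ℝ^{d+d'}, and ⟨(u,v), M(u,v)⟩ ≥ C₂²‖(u,v)‖₂². -/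
open scoped RealInnerProductSpace

/-- The Euclidean inner product on `ℝ^{d+d'} = ℝ^d × ℝ^{d'}` (sum of the componentwise
inner products). -/
noncomputable def pairInner {d d' : ℕ}
    (x y : EuclideanSpace ℝ (Fin d) × EuclideanSpace ℝ (Fin d')) : ℝ :=
  ⟪x.1, y.1⟫ + ⟪x.2, y.2⟫

/-- The block matrix `[[ (m α)^{-1} I , −Aᵀ ], [ −A , m β^{-1} I ]]` acting on
`ℝ^{d+d'} = ℝ^d × ℝ^{d'}`. -/
noncomputable def blockM {d d' : ℕ}
    (A : EuclideanSpace ℝ (Fin d) →L[ℝ] EuclideanSpace ℝ (Fin d'))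
    (α β m : ℝ) (x : EuclideanSpace ℝ (Fin d) × EuclideanSpace ℝ (Fin d')) :
    EuclideanSpace ℝ (Fin d) × EuclideanSpace ℝ (Fin d') :=
  ((m * α)⁻¹ • x.1 - (ContinuousLinearMap.adjoint A) x.2, (m * β⁻¹) • x.2 - A x.1)

lemma quad_aux (c t k g m mlo mhi a b w : ℝ)
    (hm : 0 < m) (hml : mlo ≤ m) (hmh : m ≤ mhi) (hml0 : 0 < mlo)
    (ht : 0 < t) (htc : t < c) (hk0 : 0 < k) (hg : 0 ≤ g)
    (ha : 0 ≤ a) (hb : 0 ≤ b) (hw : w ≤ g * a * b) :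
    min ((c - t) / mhi) (mlo * k) * (a ^ 2 + b ^ 2)
      ≤ c / m * a ^ 2 + m * (k + g ^ 2 / t) * b ^ 2 - 2 * w := by
  have hmhi0 : 0 < mhi := lt_of_lt_of_le hml0 (hml.trans hmh)
  have h1 : (c - t) / mhi ≤ (c - t) / m := by gcongr
  have h2 : mlo * k ≤ m * k := by nlinarith
  have h3 : 0 ≤ t / m * a ^ 2 + m * g ^ 2 / t * b ^ 2 - 2 * (g * a * b) := by
    have heq : t / m * a ^ 2 + m * g ^ 2 / t * b ^ 2 - 2 * (g * a * b)
        = (t * a - m * g * b) ^ 2 / (m * t) := by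
      field_simp; ring
    rw [heq]; positivity
  have hmin1 : min ((c - t) / mhi) (mlo * k) ≤ (c - t) / m := (min_le_left _ _).trans h1
  have hmin2 : min ((c - t) / mhi) (mlo * k) ≤ m * k := (min_le_right _ _).trans h2
  have key : c / m * a ^ 2 + m * (k + g ^ 2 / t) * b ^ 2 - 2 * w
      = (c - t) / m * a ^ 2 + m * k * b ^ 2
        + (t / m * a ^ 2 + m * g ^ 2 / t * b ^ 2 - 2 * (g * a * b)) + 2 * (g * a * b - w) := by
    ring
  set C := min ((c - t) / mhi) (mlo * k) with hC
  have hsplit : C * (a ^ 2 + b ^ 2) = C * a ^ 2 + C * b ^ 2 := mul_add _ _ _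
  rw [key, hsplit]
  have e1 := mul_le_mul_of_nonneg_right hmin1 (sq_nonneg a)
  have e2 := mul_le_mul_of_nonneg_right hmin2 (sq_nonneg b)
  linarith

lemma pairInner_blockM_eq {d d' : ℕ}
    (A : EuclideanSpace ℝ (Fin d) →L[ℝ] EuclideanSpace ℝ (Fin d'))
    (α β m : ℝ) (x : EuclideanSpace ℝ (Fin d) × EuclideanSpace ℝ (Fin d')) :
    pairInner x (blockM A α β m x)
      = (m * α)⁻¹ * ‖x.1‖ ^ 2 + m * β⁻¹ * ‖x.2‖ ^ 2 - 2 * ⟪A x.1, x.2⟫ := by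
  simp only [pairInner, blockM, inner_sub_right, real_inner_smul_right,
    real_inner_self_eq_norm_sq, ContinuousLinearMap.adjoint_inner_right]
  rw [real_inner_comm x.2 (A x.1)]
  ring

/-- Under `β‖A‖² < α⁻¹ − L/2`, the matrices `M_n` and `M` are positive definite, and the
bounds `⟨x, M_n x⟩ − L‖x₁‖²/(2μ_n) ≥ C₁‖x‖²` and `⟨x, M x⟩ ≥ C₂²‖x‖²` hold with
`C₁, C₂ > 0` independent of `n`. -/
theorem blockM_posdef_and_bounds {d d' : ℕ}
    (μ : ℝ) (hμ : 0 < μ) (L : ℝ) (hL : 0 ≤ L)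
    (μs : ℕ → ℝ) (hμs : ∀ n, 0 < μs n)
    (hsum : Summable fun n => |μs n - μ|)
    (A : EuclideanSpace ℝ (Fin d) →L[ℝ] EuclideanSpace ℝ (Fin d'))
    (α β : ℝ) (hα : 0 < α) (hβ : 0 < β)
    (hstep : β * ‖A‖ ^ 2 < α⁻¹ - L / 2) :
    (∀ n, ∀ x : EuclideanSpace ℝ (Fin d) × EuclideanSpace ℝ (Fin d'),
        x ≠ 0 → 0 < pairInner x (blockM A α β (μs n) x)) ∧
    (∀ x : EuclideanSpace ℝ (Fin d) × EuclideanSpace ℝ (Fin d'),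
        x ≠ 0 → 0 < pairInner x (blockM A α β μ x)) ∧
    (∃ C₁ > (0 : ℝ), ∀ n, ∀ x : EuclideanSpace ℝ (Fin d) × EuclideanSpace ℝ (Fin d'),
        C₁ * (‖x.1‖ ^ 2 + ‖x.2‖ ^ 2)
          ≤ pairInner x (blockM A α β (μs n) x) - L * ‖x.1‖ ^ 2 / (2 * μs n)) ∧
    (∃ C₂ > (0 : ℝ), ∀ x : EuclideanSpace ℝ (Fin d) × EuclideanSpace ℝ (Fin d'),
        C₂ ^ 2 * (‖x.1‖ ^ 2 + ‖x.2‖ ^ 2) ≤ pairInner x (blockM A α β μ x)) := by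
  set g : ℝ := ‖A‖ with hgdef
  clear_value g
  have hg : 0 ≤ g := hgdef ▸ norm_nonneg A
  set c : ℝ := α⁻¹ - L / 2 with hcdef
  clear_value c
  have hgsq : 0 ≤ β * g ^ 2 := by positivity
  have hc0 : 0 < c := lt_of_le_of_lt hgsq hstep
  set t : ℝ := (β * g ^ 2 + c) / 2 with htdef
  clear_value t
  have ht0 : 0 < t := by rw [htdef]; linarith
  have htc : t < c := by rw [htdef]; linarith
  have htg : β * g ^ 2 < t := by rw [htdef]; linarith
  set k : ℝ := β⁻¹ - g ^ 2 / t with hkdef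
  clear_value k
  have hk0 : 0 < k := by
    rw [hkdef, sub_pos, div_lt_iff₀ ht0, inv_eq_one_div, div_mul_eq_mul_div, lt_div_iff₀ hβ]
    nlinarith
  have hkβ : k + g ^ 2 / t = β⁻¹ := by rw [hkdef]; ring
  -- lower bound on μs
  obtain ⟨N, hN⟩ := Metric.tendsto_atTop.mp hsum.tendsto_atTop_zero (μ / 2) (by positivity)
  set mlo : ℝ := min (μ / 2) ((Finset.range (N + 1)).inf'
    (Finset.nonempty_range_iff.mpr (Nat.succ_ne_zero N)) μs) with hmlodef
  have hmlo0 : 0 < mlo := by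
    refine lt_min (by positivity) ?_
    rw [Finset.lt_inf'_iff]
    exact fun i _ => hμs i
  have hmlo : ∀ n, mlo ≤ μs n := by
    intro n
    rcases le_or_gt n N with h | h
    · exact le_trans (min_le_right _ _)
        (Finset.inf'_le _ (Finset.mem_range.mpr (Nat.lt_succ_of_le h)))
    · have h2 := hN n h.le
      rw [Real.dist_eq, sub_zero, abs_abs] at h2
      have h3 := abs_lt.mp h2
      have := min_le_left (μ / 2) ((Finset.range (N + 1)).inf'
        (Finset.nonempty_range_iff.mpr (Nat.succ_ne_zero N)) μs)
      rw [← hmlodef] at this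
      linarith [h3.1]
  -- upper bound on μs
  set S : ℝ := ∑' n, |μs n - μ| with hSdef
  have hS0 : 0 ≤ S := tsum_nonneg (fun n => abs_nonneg _)
  set mhi : ℝ := μ + S with hmhidef
  have hmhi : ∀ n, μs n ≤ mhi := by
    intro n
    have h1 : |μs n - μ| ≤ S := Summable.le_tsum hsum n (fun i _ => abs_nonneg _)
    have h2 := le_abs_self (μs n - μ)
    rw [hmhidef]; linarith
  have hmloμ : mlo ≤ μ := le_trans (min_le_left _ _) (by linarith)
  have hμhi : μ ≤ mhi := by rw [hmhidef]; linarith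
  -- general identity and cross term bound
  have hcross : ∀ x : EuclideanSpace ℝ (Fin d) × EuclideanSpace ℝ (Fin d'),
      (⟪A x.1, x.2⟫ : ℝ) ≤ g * ‖x.1‖ * ‖x.2‖ := by
    intro x
    refine (real_inner_le_norm _ _).trans ?_
    have := A.le_opNorm x.1
    rw [← hgdef] at this
    have h2 : ‖A x.1‖ * ‖x.2‖ ≤ (g * ‖x.1‖) * ‖x.2‖ :=
      mul_le_mul_of_nonneg_right this (norm_nonneg _)
    linarith
  have hId : ∀ (m : ℝ), 0 < m → ∀ x : EuclideanSpace ℝ (Fin d) × EuclideanSpace ℝ (Fin d'),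
      pairInner x (blockM A α β m x) - L * ‖x.1‖ ^ 2 / (2 * m)
        = c / m * ‖x.1‖ ^ 2 + m * (k + g ^ 2 / t) * ‖x.2‖ ^ 2 - 2 * ⟪A x.1, x.2⟫ := by
    intro m hm x
    rw [pairInner_blockM_eq, hkβ, hcdef]
    field_simp
    ring
  -- bound for M_n
  have keyn : ∀ n, ∀ x : EuclideanSpace ℝ (Fin d) × EuclideanSpace ℝ (Fin d'),
      min ((c - t) / mhi) (mlo * k) * (‖x.1‖ ^ 2 + ‖x.2‖ ^ 2)
        ≤ pairInner x (blockM A α β (μs n) x) - L * ‖x.1‖ ^ 2 / (2 * μs n) := by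
    intro n x
    rw [hId (μs n) (hμs n) x]
    exact quad_aux c t k g (μs n) mlo mhi ‖x.1‖ ‖x.2‖ _ (hμs n) (hmlo n) (hmhi n) hmlo0
      ht0 htc hk0 hg (norm_nonneg _) (norm_nonneg _) (hcross x)
  have hC₁0 : 0 < min ((c - t) / mhi) (mlo * k) :=
    lt_min (div_pos (by linarith) (by linarith)) (mul_pos hmlo0 hk0)
  -- bound for M
  have keyμ : ∀ x : EuclideanSpace ℝ (Fin d) × EuclideanSpace ℝ (Fin d'),
      min ((c - t) / mhi) (mlo * k) * (‖x.1‖ ^ 2 + ‖x.2‖ ^ 2)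
        ≤ pairInner x (blockM A α β μ x) := by
    intro x
    have h1 : min ((c - t) / mhi) (mlo * k) * (‖x.1‖ ^ 2 + ‖x.2‖ ^ 2)
        ≤ pairInner x (blockM A α β μ x) - L * ‖x.1‖ ^ 2 / (2 * μ) := by
      rw [hId μ hμ x]
      exact quad_aux c t k g μ mlo mhi ‖x.1‖ ‖x.2‖ _ hμ hmloμ hμhi hmlo0
        ht0 htc hk0 hg (norm_nonneg _) (norm_nonneg _) (hcross x)
    have h2 : 0 ≤ L * ‖x.1‖ ^ 2 / (2 * μ) := by positivity
    linarith
  have hxpos : ∀ x : EuclideanSpace ℝ (Fin d) × EuclideanSpace ℝ (Fin d'),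
      x ≠ 0 → 0 < ‖x.1‖ ^ 2 + ‖x.2‖ ^ 2 := by
    intro x hx
    have h : x.1 ≠ 0 ∨ x.2 ≠ 0 := by
      by_contra h; push_neg at h; exact hx (Prod.ext h.1 h.2)
    rcases h with h | h
    · have : 0 < ‖x.1‖ ^ 2 := pow_pos (norm_pos_iff.mpr h) 2
      nlinarith [sq_nonneg ‖x.2‖]
    · have : 0 < ‖x.2‖ ^ 2 := pow_pos (norm_pos_iff.mpr h) 2
      nlinarith [sq_nonneg ‖x.1‖]
  refine ⟨?_, ?_, ⟨min ((c - t) / mhi) (mlo * k), hC₁0, keyn⟩,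
    ⟨Real.sqrt (min ((c - t) / mhi) (mlo * k)), Real.sqrt_pos.mpr hC₁0, ?_⟩⟩
  · intro n x hx
    have h1 := keyn n x
    have h2 : 0 < min ((c - t) / mhi) (mlo * k) * (‖x.1‖ ^ 2 + ‖x.2‖ ^ 2) :=
      mul_pos hC₁0 (hxpos x hx)
    have h3 : 0 ≤ L * ‖x.1‖ ^ 2 / (2 * μs n) :=
      div_nonneg (by positivity) (by linarith [hμs n])
    linarith
  · intro x hx
    have h1 := keyμ x
    have h2 : 0 < min ((c - t) / mhi) (mlo * k) * (‖x.1‖ ^ 2 + ‖x.2‖ ^ 2) :=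
      mul_pos hC₁0 (hxpos x hx)
    linarith
  · intro x
    rw [Real.sq_sqrt hC₁0.le]
    exact keyμ x
end

section
/- Let μ > 0, L ≥ 0, (μ_n) a sequence of positive reals with Σ_n |μ_n − μ| < ∞, A : ℝ^d → ℝ^{d'} linear, and α, β > 0 with β‖A‖² < α^{-1} − L/2. With M_n = [[ (μ_n α)^{-1} I , −Aᵀ ], [ −A , μ_n β^{-1} I ]] and M = [[ (μ α)^{-1} I , −Aᵀ ], [ −A , μ β^{-1} I ]], there exist summable sequences (e_n) and (f_n) of positive reals such that ‖x‖_M ≤ (1 + e_n)‖x‖_{M_n} and ‖x‖_{M_n} ≤ (1 + f_n)‖x‖_M for all n and all x ∈ ℝ^{d+d'}. -/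
open scoped RealInnerProductSpace
open Filter

lemma pairInner_blockM {d d' : ℕ}
    (A : EuclideanSpace ℝ (Fin d) →L[ℝ] EuclideanSpace ℝ (Fin d'))
    (α β m : ℝ) (x : EuclideanSpace ℝ (Fin d) × EuclideanSpace ℝ (Fin d')) :
    pairInner x (blockM A α β m x)
      = (m * α)⁻¹ * ‖x.1‖ ^ 2 + (m * β⁻¹) * ‖x.2‖ ^ 2 - 2 * ⟪A x.1, x.2⟫ := by
  simp only [pairInner, blockM, inner_sub_right, real_inner_smul_right,
    ContinuousLinearMap.adjoint_inner_right, real_inner_self_eq_norm_sq]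
  rw [real_inner_comm x.2 (A x.1)]
  ring

lemma core_ineq (α β m p q : ℝ) (hα : 0 < α) (hβ : 0 < β) (hm : 0 < m) :
    2 * p * q ≤ Real.sqrt (α * β) * ((m * α)⁻¹ * p ^ 2 + (m * β⁻¹) * q ^ 2) := by
  set s := Real.sqrt (α * β) with hs
  have hs0 : 0 < s := Real.sqrt_pos.2 (by positivity)
  have hs2 : s ^ 2 = α * β := Real.sq_sqrt (by positivity)
  have hαs : α = s ^ 2 / β := by field_simp [hs2]; linarith
  rw [← sub_nonneg, hαs]
  have key : s * ((m * (s ^ 2 / β))⁻¹ * p ^ 2 + (m * β⁻¹) * q ^ 2) - 2 * p * q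
      = s * (p * β - s * m * q) ^ 2 / (m * s ^ 2 * β) := by
    field_simp
    ring
  rw [key]
  positivity

lemma Q_lower {d d' : ℕ}
    (A : EuclideanSpace ℝ (Fin d) →L[ℝ] EuclideanSpace ℝ (Fin d'))
    (α β m : ℝ) (hα : 0 < α) (hβ : 0 < β) (hm : 0 < m)
    (x : EuclideanSpace ℝ (Fin d) × EuclideanSpace ℝ (Fin d')) :
    (1 - Real.sqrt (α * β) * ‖A‖) * ((m * α)⁻¹ * ‖x.1‖ ^ 2 + (m * β⁻¹) * ‖x.2‖ ^ 2)
      ≤ (m * α)⁻¹ * ‖x.1‖ ^ 2 + (m * β⁻¹) * ‖x.2‖ ^ 2 - 2 * ⟪A x.1, x.2⟫ := by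
  have h1 : ⟪A x.1, x.2⟫ ≤ ‖A‖ * ‖x.1‖ * ‖x.2‖ := by
    calc ⟪A x.1, x.2⟫ ≤ ‖A x.1‖ * ‖x.2‖ := real_inner_le_norm _ _
    _ ≤ ‖A‖ * ‖x.1‖ * ‖x.2‖ :=
      mul_le_mul_of_nonneg_right (A.le_opNorm x.1) (norm_nonneg _)
  have h2 := core_ineq α β m ‖x.1‖ ‖x.2‖ hα hβ hm
  have hA0 : (0:ℝ) ≤ ‖A‖ := norm_nonneg _
  nlinarith [mul_le_mul_of_nonneg_left h2 hA0]

lemma compare_ineq (α β m m' p q : ℝ) (hα : 0 < α) (hβ : 0 < β)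
    (hm : 0 < m) (hm' : 0 < m') :
    (m' * α)⁻¹ * p ^ 2 + (m' * β⁻¹) * q ^ 2
      ≤ (m * α)⁻¹ * p ^ 2 + (m * β⁻¹) * q ^ 2
        + |m' - m| * (1 / m' + 1 / m) * ((m * α)⁻¹ * p ^ 2 + (m * β⁻¹) * q ^ 2) := by
  have hid1 : (m' * α)⁻¹ = (m * α)⁻¹ + (m - m') * ((1 / m') * (m * α)⁻¹) := by
    field_simp
    ring
  have hid2 : m' * β⁻¹ = m * β⁻¹ + (m' - m) * ((1 / m) * (m * β⁻¹)) := by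
    field_simp
    ring
  rw [hid1, hid2]
  have h1 : m - m' ≤ |m' - m| := by rw [abs_sub_comm]; exact le_abs_self _
  have h2 : m' - m ≤ |m' - m| := le_abs_self _
  have n1 : (0:ℝ) ≤ (1 / m') * (m * α)⁻¹ * p ^ 2 := by positivity
  have n2 : (0:ℝ) ≤ (1 / m) * (m * β⁻¹) * q ^ 2 := by positivity
  have n3 : (0:ℝ) ≤ (1 / m) * (m * α)⁻¹ * p ^ 2 := by positivity
  have n4 : (0:ℝ) ≤ (1 / m') * (m * β⁻¹) * q ^ 2 := by positivity
  nlinarith [mul_le_mul_of_nonneg_right h1 n1, mul_le_mul_of_nonneg_right h2 n2,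
    mul_nonneg (abs_nonneg (m' - m)) n3, mul_nonneg (abs_nonneg (m' - m)) n4]

lemma combine_aux (δ K S S' I : ℝ) (hδ : 0 < δ) (hK : 0 ≤ K)
    (hlow : δ * S ≤ S - 2 * I) (hcomp : S' ≤ S + K * S) :
    S' - 2 * I ≤ (1 + K / δ) * (S - 2 * I) := by
  rw [← mul_le_mul_iff_right₀ hδ]
  have hexp : δ * ((1 + K / δ) * (S - 2 * I)) = δ * (S - 2 * I) + K * (S - 2 * I) := by
    field_simp
  rw [hexp]
  nlinarith [mul_le_mul_of_nonneg_left hlow hK, mul_le_mul_of_nonneg_left hcomp hδ.le]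

lemma sqrt_comp_aux (a b t : ℝ) (ht : 0 ≤ t) (h : a ≤ (1 + t) * b) :
    Real.sqrt a ≤ (1 + t) * Real.sqrt b := by
  have h1 : Real.sqrt (1 + t) ≤ 1 + t := by
    have := Real.sqrt_le_sqrt (show (1:ℝ) + t ≤ (1 + t) ^ 2 by nlinarith)
    rwa [Real.sqrt_sq (by linarith)] at this
  calc Real.sqrt a ≤ Real.sqrt ((1 + t) * b) := Real.sqrt_le_sqrt h
    _ = Real.sqrt (1 + t) * Real.sqrt b := Real.sqrt_mul (by linarith) b
    _ ≤ (1 + t) * Real.sqrt b := mul_le_mul_of_nonneg_right h1 (Real.sqrt_nonneg _)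

lemma summable_aux (μ : ℝ) (hμ : 0 < μ) (μs : ℕ → ℝ) (hμs : ∀ n, 0 < μs n)
    (hsum : Summable fun n => |μs n - μ|) (C : ℝ) (hC : 0 < C) :
    Summable fun n => |μs n - μ| * (1 / μs n + 1 / μ) / C := by
  have htend : Tendsto (fun n => |μs n - μ|) atTop (nhds 0) :=
    hsum.tendsto_atTop_zero
  have hev : ∀ᶠ n in atTop, |μs n - μ| < μ / 2 :=
    htend.eventually_lt_const (half_pos hμ)
  obtain ⟨N, hN⟩ := eventually_atTop.1 hev
  have hbound : ∀ n, N ≤ n → |μs n - μ| * (1 / μs n + 1 / μ) / C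
      ≤ |μs n - μ| * (3 / μ / C) := by
    intro n hn
    have h1 : μ / 2 ≤ μs n := by
      have := abs_lt.1 (hN n hn)
      linarith [this.1]
    have h2 : 1 / μs n ≤ 2 / μ := by
      rw [div_le_div_iff₀ (hμs n) hμ]
      linarith
    have h3 : 1 / μs n + 1 / μ ≤ 3 / μ := by
      have : (2:ℝ) / μ + 1 / μ = 3 / μ := by ring
      linarith
    rw [div_eq_mul_inv, div_eq_mul_inv (3 / μ), ← mul_assoc]
    exact mul_le_mul_of_nonneg_right
      (mul_le_mul_of_nonneg_left h3 (abs_nonneg _)) (by positivity)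
  rw [← summable_nat_add_iff N]
  have hmaj : Summable fun k => |μs (k + N) - μ| * (3 / μ / C) :=
    ((summable_nat_add_iff N).2 hsum).mul_right _
  exact Summable.of_nonneg_of_le (fun k => by have := hμs (k + N); positivity)
    (fun k => hbound (k + N) (Nat.le_add_left N k)) hmaj

/-- There exist summable sequences `(e_n)`, `(f_n)` of positive reals such that
`‖x‖_M ≤ (1 + e_n)‖x‖_{M_n}` and `‖x‖_{M_n} ≤ (1 + f_n)‖x‖_M` for all `n` and `x`,
where `‖x‖_N = √⟨x, N x⟩`. -/
theorem blockM_norm_equivalence {d d' : ℕ}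
    (μ : ℝ) (hμ : 0 < μ) (L : ℝ) (hL : 0 ≤ L)
    (μs : ℕ → ℝ) (hμs : ∀ n, 0 < μs n)
    (hsum : Summable fun n => |μs n - μ|)
    (A : EuclideanSpace ℝ (Fin d) →L[ℝ] EuclideanSpace ℝ (Fin d'))
    (α β : ℝ) (hα : 0 < α) (hβ : 0 < β)
    (hstep : β * ‖A‖ ^ 2 < α⁻¹ - L / 2) :
    ∃ e f : ℕ → ℝ, (∀ n, 0 < e n) ∧ (∀ n, 0 < f n) ∧ Summable e ∧ Summable f ∧
      ∀ n, ∀ x : EuclideanSpace ℝ (Fin d) × EuclideanSpace ℝ (Fin d'),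
        Real.sqrt (pairInner x (blockM A α β μ x))
            ≤ (1 + e n) * Real.sqrt (pairInner x (blockM A α β (μs n) x)) ∧
        Real.sqrt (pairInner x (blockM A α β (μs n) x))
            ≤ (1 + f n) * Real.sqrt (pairInner x (blockM A α β μ x)) := by
  -- the spectral gap δ
  have hstep' : β * ‖A‖ ^ 2 < α⁻¹ := by linarith
  have hinv : α * α⁻¹ = 1 := mul_inv_cancel₀ hα.ne'
  have h1 : α * β * ‖A‖ ^ 2 < 1 := by
    nlinarith [mul_lt_mul_of_pos_left hstep' hα]
  have hs2 : Real.sqrt (α * β) ^ 2 = α * β := Real.sq_sqrt (by positivity)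
  have hc2 : (Real.sqrt (α * β) * ‖A‖) ^ 2 < 1 := by
    rw [mul_pow, hs2]; nlinarith
  set δ := 1 - Real.sqrt (α * β) * ‖A‖ with hδdef
  have hδ : 0 < δ := by
    have := sq_nonneg (Real.sqrt (α * β) * ‖A‖ - 1)
    nlinarith
  -- the sequence
  set F : ℕ → ℝ := fun n => |μs n - μ| * (1 / μs n + 1 / μ) / δ + (1 / 2) ^ n with hFdef
  have hFpos : ∀ n, 0 < F n := by
    intro n
    have h0 : (0:ℝ) ≤ |μs n - μ| * (1 / μs n + 1 / μ) / δ := by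
      have := hμs n; positivity
    have h2 : (0:ℝ) < (1 / 2 : ℝ) ^ n := by positivity
    simp only [hFdef]
    linarith
  have hFsum : Summable F :=
    (summable_aux μ hμ μs hμs hsum δ hδ).add
      (summable_geometric_of_lt_one (by norm_num) (by norm_num))
  -- nonnegativity of the quadratic form
  have hQ0 : ∀ m, 0 < m → ∀ x : EuclideanSpace ℝ (Fin d) × EuclideanSpace ℝ (Fin d'),
      0 ≤ pairInner x (blockM A α β m x) := by
    intro m hm x
    rw [pairInner_blockM]
    have h := Q_lower A α β m hα hβ hm x
    have hS : (0:ℝ) ≤ (m * α)⁻¹ * ‖x.1‖ ^ 2 + (m * β⁻¹) * ‖x.2‖ ^ 2 := by positivity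
    nlinarith [mul_nonneg hδ.le hS]
  -- key comparison
  have key : ∀ m m', 0 < m → 0 < m' →
      ∀ x : EuclideanSpace ℝ (Fin d) × EuclideanSpace ℝ (Fin d'),
      pairInner x (blockM A α β m' x)
        ≤ (1 + |m' - m| * (1 / m' + 1 / m) / δ) * pairInner x (blockM A α β m x) := by
    intro m m' hm hm' x
    rw [pairInner_blockM, pairInner_blockM]
    exact combine_aux δ (|m' - m| * (1 / m' + 1 / m)) _ _ _ hδ (by positivity)
      (Q_lower A α β m hα hβ hm x) (compare_ineq α β m m' ‖x.1‖ ‖x.2‖ hα hβ hm hm')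
  refine ⟨F, F, hFpos, hFpos, hFsum, hFsum, fun n x => ?_⟩
  have hGF : |μs n - μ| * (1 / μs n + 1 / μ) / δ ≤ F n := by
    have : (0:ℝ) < (1 / 2 : ℝ) ^ n := by positivity
    simp only [hFdef]
    linarith
  constructor
  · -- √Q(μ) ≤ (1+F n) √Q(μs n)
    apply sqrt_comp_aux _ _ _ (hFpos n).le
    have hk := key (μs n) μ (hμs n) hμ x
    have heq : |μ - μs n| * (1 / μ + 1 / μs n) = |μs n - μ| * (1 / μs n + 1 / μ) := by
      rw [abs_sub_comm]; ring
    rw [heq] at hk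
    calc pairInner x (blockM A α β μ x)
        ≤ (1 + |μs n - μ| * (1 / μs n + 1 / μ) / δ) * pairInner x (blockM A α β (μs n) x) := hk
      _ ≤ (1 + F n) * pairInner x (blockM A α β (μs n) x) :=
          mul_le_mul_of_nonneg_right (by linarith) (hQ0 (μs n) (hμs n) x)
  · -- √Q(μs n) ≤ (1+F n) √Q(μ)
    apply sqrt_comp_aux _ _ _ (hFpos n).le
    have hk := key μ (μs n) hμ (hμs n) x
    calc pairInner x (blockM A α β (μs n) x)
        ≤ (1 + |μs n - μ| * (1 / μs n + 1 / μ) / δ) * pairInner x (blockM A α β μ x) := hk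
      _ ≤ (1 + F n) * pairInner x (blockM A α β μ x) :=
          mul_le_mul_of_nonneg_right (by linarith) (hQ0 μ hμ x)
end

section
/- Let f : ℝ^d → ℝ be convex and differentiable with L-Lipschitz gradient (L > 0). Then for all a, b, c ∈ ℝ^d: −⟨c − a, ∇f(b) − ∇f(a)⟩ ≤ (L/4)‖b − c‖₂²; in particular ⟨c − a, ∇f(b) − ∇f(a)⟩ ≥ −(L/4)‖b − c‖₂². -/
open scoped RealInnerProductSpace

section Aux

variable {E : Type*} [NormedAddCommGroup E] [InnerProductSpace ℝ E] [CompleteSpace E]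
variable {f : E → ℝ} {f' : E → E}

/-- Chain rule: derivative of `f` along the line `t ↦ x + t • v`. -/
lemma aux_hasDerivAt_line (hgrad : ∀ x, HasGradientAt f (f' x) x) (x v : E) (t : ℝ) :
    HasDerivAt (fun s : ℝ => f (x + s • v)) ⟪f' (x + t • v), v⟫ t := by
  have hcurve : HasDerivAt (fun s : ℝ => x + s • v) v t := by
    simpa using ((hasDerivAt_id t).smul_const v).const_add x
  have := (hgrad (x + t • v)).hasFDerivAt.comp_hasDerivAt t hcurve
  simpa [InnerProductSpace.toDual_apply_apply, Function.comp_def] using this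

/-- First-order lower bound for convex differentiable functions. -/
lemma aux_convex_lower (hconv : ConvexOn ℝ Set.univ f)
    (hgrad : ∀ x, HasGradientAt f (f' x) x) (x y : E) :
    f x + ⟪f' x, y - x⟫ ≤ f y := by
  set v := y - x with hv
  have hgconv : ConvexOn ℝ Set.univ (fun t : ℝ => f (x + t • v)) := by
    have := hconv.comp_affineMap (AffineMap.lineMap x y)
    have heq : ∀ t : ℝ, (f ∘ (AffineMap.lineMap x y)) t = f (x + t • v) := by
      intro t; simp [AffineMap.lineMap_apply, hv, add_comm]
    simpa [Set.preimage_univ, funext heq] using this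
  have hderiv := aux_hasDerivAt_line hgrad x v 0
  have h01 : (0 : ℝ) < 1 := one_pos
  have hslope := hgconv.le_slope_of_hasDerivAt (Set.mem_univ 0) (Set.mem_univ 1) h01
    (by simpa using hderiv)
  rw [slope_def_field] at hslope
  have : ⟪f' x, v⟫ ≤ f (x + (1:ℝ) • v) - f (x + (0:ℝ) • v) := by
    simpa [div_one] using hslope
  simp only [one_smul, zero_smul, add_zero, hv, add_sub_cancel] at this
  linarith

/-- Descent lemma: quadratic upper bound from Lipschitz gradient. -/
lemma aux_descent {L : ℝ} (hL : 0 < L)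
    (hgrad : ∀ x, HasGradientAt f (f' x) x)
    (hlip : ∀ x y, ‖f' x - f' y‖ ≤ L * ‖x - y‖) (x y : E) :
    f y ≤ f x + ⟪f' x, y - x⟫ + L / 2 * ‖y - x‖ ^ 2 := by
  set v := y - x with hv
  set g : ℝ → ℝ := fun t => f (x + t • v) - t * ⟪f' x, v⟫ - L / 2 * ‖v‖ ^ 2 * t ^ 2 with hg
  have hgderiv : ∀ t : ℝ, HasDerivAt g
      (⟪f' (x + t • v), v⟫ - ⟪f' x, v⟫ - L * ‖v‖ ^ 2 * t) t := by
    intro t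
    have h1 := aux_hasDerivAt_line hgrad x v t
    have h2 : HasDerivAt (fun t : ℝ => t * ⟪f' x, v⟫) ⟪f' x, v⟫ t := by
      simpa using (hasDerivAt_id t).mul_const ⟪f' x, v⟫
    have h3 : HasDerivAt (fun t : ℝ => L / 2 * ‖v‖ ^ 2 * t ^ 2) (L * ‖v‖ ^ 2 * t) t := by
      have := (hasDerivAt_pow 2 t).const_mul (L / 2 * ‖v‖ ^ 2)
      exact this.congr_deriv (by rw [show (2:ℕ) - 1 = 1 from rfl]; push_cast; ring)
    exact (h1.sub h2).sub h3
  have hanti : AntitoneOn g (Set.Icc 0 1) := by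
    apply antitoneOn_of_deriv_nonpos (convex_Icc 0 1)
    · exact fun t _ => ((hgderiv t).differentiableAt.continuousAt).continuousWithinAt
    · intro t ht
      exact ((hgderiv t).differentiableAt).differentiableWithinAt
    · intro t ht
      rw [interior_Icc] at ht
      rw [(hgderiv t).deriv]
      have hinner : ⟪f' (x + t • v), v⟫ - ⟪f' x, v⟫ = ⟪f' (x + t • v) - f' x, v⟫ := by
        rw [inner_sub_left]
      have hbd : ⟪f' (x + t • v) - f' x, v⟫ ≤ ‖f' (x + t • v) - f' x‖ * ‖v‖ :=
        real_inner_le_norm _ _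
      have hlipb : ‖f' (x + t • v) - f' x‖ ≤ L * (t * ‖v‖) := by
        have := hlip (x + t • v) x
        have h' : ‖x + t • v - x‖ = t * ‖v‖ := by
          rw [add_sub_cancel_left, norm_smul, Real.norm_eq_abs, abs_of_pos ht.1]
        rw [h'] at this; exact this
      have hvnn : (0:ℝ) ≤ ‖v‖ := norm_nonneg _
      nlinarith [mul_le_mul_of_nonneg_right hlipb hvnn]
  have h01 : g 1 ≤ g 0 := hanti (by norm_num) (by norm_num) zero_le_one
  simp only [hg, one_smul, zero_smul, add_zero, one_mul, one_pow, zero_mul, mul_zero] at h01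
  rw [hv] at h01
  simp only [add_sub_cancel] at h01
  linarith

/-- Cocoercivity, half version. -/
lemma aux_coco_half {L : ℝ} (hL : 0 < L)
    (hconv : ConvexOn ℝ Set.univ f)
    (hgrad : ∀ x, HasGradientAt f (f' x) x)
    (hlip : ∀ x y, ‖f' x - f' y‖ ≤ L * ‖x - y‖) (a b : E) :
    ‖f' b - f' a‖ ^ 2 / (2 * L) ≤ f b - f a - ⟪f' a, b - a⟫ := by
  set g := f' b - f' a with hgdef
  set y := b - (1 / L) • g with hy
  have h1 : f a + ⟪f' a, y - a⟫ ≤ f y := aux_convex_lower hconv hgrad a y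
  have h2 : f y ≤ f b + ⟪f' b, y - b⟫ + L / 2 * ‖y - b‖ ^ 2 :=
    aux_descent hL hgrad hlip b y
  have hyb : y - b = -((1 / L) • g) := by rw [hy]; abel
  have hnorm : ‖y - b‖ ^ 2 = (1 / L) ^ 2 * ‖g‖ ^ 2 := by
    rw [hyb, norm_neg, norm_smul, Real.norm_eq_abs, mul_pow, sq_abs]
  have hinner2 : ⟪f' b, y - b⟫ = -(1 / L) * ⟪f' b, g⟫ := by
    rw [hyb, inner_neg_right, real_inner_smul_right]; ring
  have hinner1 : ⟪f' a, y - a⟫ = ⟪f' a, b - a⟫ - (1 / L) * ⟪f' a, g⟫ := by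
    have : y - a = (b - a) - (1 / L) • g := by rw [hy]; abel
    rw [this, inner_sub_right, real_inner_smul_right]
  have hgg : ⟪f' b, g⟫ - ⟪f' a, g⟫ = ‖g‖ ^ 2 := by
    rw [← inner_sub_left, ← hgdef, real_inner_self_eq_norm_sq]
  have hLne : L ≠ 0 := ne_of_gt hL
  rw [hinner1] at h1
  rw [hinner2, hnorm] at h2
  have key : f a + ⟪f' a, b - a⟫ + ‖g‖ ^ 2 / (2 * L) ≤ f b := by
    have e1 : L / 2 * ((1 / L) ^ 2 * ‖g‖ ^ 2) = ‖g‖ ^ 2 / (2 * L) := by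
      field_simp
    have e2 : -(1 / L) * ⟪f' b, g⟫ + ‖g‖ ^ 2 / (2 * L) + (1 / L) * ⟪f' a, g⟫
        = -(‖g‖ ^ 2 / (2 * L)) := by
      rw [← hgg]; field_simp; ring
    nlinarith [h1, h2, e1, e2]
  linarith

/-- Cocoercivity. -/
lemma aux_coco {L : ℝ} (hL : 0 < L)
    (hconv : ConvexOn ℝ Set.univ f)
    (hgrad : ∀ x, HasGradientAt f (f' x) x)
    (hlip : ∀ x y, ‖f' x - f' y‖ ≤ L * ‖x - y‖) (a b : E) :
    ‖f' b - f' a‖ ^ 2 / L ≤ ⟪f' b - f' a, b - a⟫ := by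
  have h1 := aux_coco_half hL hconv hgrad hlip a b
  have h2 := aux_coco_half hL hconv hgrad hlip b a
  have hsymm : ‖f' a - f' b‖ = ‖f' b - f' a‖ := by rw [norm_sub_rev]
  rw [hsymm] at h2
  have hin : ⟪f' a, b - a⟫ + ⟪f' b, a - b⟫ = -⟪f' b - f' a, b - a⟫ := by
    have : (a : E) - b = -(b - a) := by abel
    rw [this, inner_neg_right, inner_sub_left]; ring
  have : ‖f' b - f' a‖ ^ 2 / (2 * L) + ‖f' b - f' a‖ ^ 2 / (2 * L)
      ≤ ⟪f' b - f' a, b - a⟫ := by linarith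
  have he : ‖f' b - f' a‖ ^ 2 / (2 * L) + ‖f' b - f' a‖ ^ 2 / (2 * L)
      = ‖f' b - f' a‖ ^ 2 / L := by field_simp; ring
  linarith [he ▸ this]

end Aux

/-- If `f` is convex with `L`-Lipschitz gradient, then for all `a, b, c`:
`−⟨c − a, ∇f(b) − ∇f(a)⟩ ≤ (L/4)‖b − c‖²`; in particular
`⟨c − a, ∇f(b) − ∇f(a)⟩ ≥ −(L/4)‖b − c‖²`. -/
theorem neg_inner_grad_le {d : ℕ}
    (f : EuclideanSpace ℝ (Fin d) → ℝ)
    (f' : EuclideanSpace ℝ (Fin d) → EuclideanSpace ℝ (Fin d))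
    (L : ℝ) (hL : 0 < L)
    (hconv : ConvexOn ℝ Set.univ f)
    (hgrad : ∀ x, HasGradientAt f (f' x) x)
    (hlip : ∀ x y, ‖f' x - f' y‖ ≤ L * ‖x - y‖)
    (a b c : EuclideanSpace ℝ (Fin d)) :
    -⟪c - a, f' b - f' a⟫ ≤ L / 4 * ‖b - c‖ ^ 2 ∧
    ⟪c - a, f' b - f' a⟫ ≥ -(L / 4 * ‖b - c‖ ^ 2) := by
  have hcoco := aux_coco hL hconv hgrad hlip a b
  set g := f' b - f' a with hgdef
  have hsplit : -⟪c - a, g⟫ = ⟪b - c, g⟫ - ⟪b - a, g⟫ := by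
    have : (c : EuclideanSpace ℝ (Fin d)) - a = (b - a) - (b - c) := by abel
    rw [this, inner_sub_left]; ring
  have hcs : ⟪b - c, g⟫ ≤ ‖b - c‖ * ‖g‖ := real_inner_le_norm _ _
  have hba : ‖g‖ ^ 2 / L ≤ ⟪b - a, g⟫ := by
    rwa [real_inner_comm] at hcoco
  have key : -⟪c - a, g⟫ ≤ L / 4 * ‖b - c‖ ^ 2 := by
    rw [hsplit]
    have h1 : ⟪b - c, g⟫ - ⟪b - a, g⟫ ≤ ‖b - c‖ * ‖g‖ - ‖g‖ ^ 2 / L := by linarith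
    have h2 : ‖b - c‖ * ‖g‖ - ‖g‖ ^ 2 / L ≤ L / 4 * ‖b - c‖ ^ 2 := by
      have hdc : ‖g‖ ^ 2 / L * L = ‖g‖ ^ 2 := div_mul_cancel₀ _ (ne_of_gt hL)
      nlinarith [sq_nonneg (L * ‖b - c‖ - 2 * ‖g‖), hdc, hL]
    linarith
  exact ⟨key, by linarith⟩
end
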